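/- Let 1 > r_1 ≥ r_2 ≥ ⋯ ≥ r_J > 0 with J ≥ 2, let D be the real root of ∑_{j=1}^J r_j^D = 1, let D̃ be the real root of ∑_{j=1}^{J−1} r_j^{D̃} = 1, and let f(s) = 1 − ∑_{j=1}^J r_j^s. If s_0 is a zero of f with D̃ < Re(s_0) < D, then Re(r_j^{s_0}) ≥ 0 for every j = 1, 2, …, J. -/

import Mathlib

/-- with `1 > r₁ ≥ ⋯ ≥ r_J > 0`, `D` the root of `∑ⱼ rⱼ^D = 1`,
`D̃` the root of `∑_{j<J} rⱼ^{D̃} = 1`, and `f(s) = 1 - ∑ⱼ rⱼ^s`, every zero `s₀`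
of `f` with `D̃ < Re(s₀) < D` satisfies `Re(rⱼ^{s₀}) ≥ 0` for every `j`. -/
theorem stmt_9
    (J : ℕ) (hJ : 2 ≤ J)
    (r : Fin J → ℝ) (hr0 : ∀ j, 0 < r j) (hr1 : ∀ j, r j < 1)
    (hanti : Antitone r)
    (D : ℝ) (hD : ∑ j, r j ^ D = 1)
    (Dt : ℝ) (hDt : ∑ j ∈ Finset.univ.filter (fun j : Fin J => (j : ℕ) + 1 < J),
      r j ^ Dt = 1)
    (s₀ : ℂ) (hzero : 1 - ∑ j, (r j : ℂ) ^ s₀ = 0)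
    (hre1 : Dt < s₀.re) (hre2 : s₀.re < D) :
    ∀ j : Fin J, 0 ≤ ((r j : ℂ) ^ s₀).re := by
  intro j₀
  set σ := s₀.re with hσ
  set T : Finset (Fin J) := Finset.univ.filter (fun j : Fin J => (j : ℕ) + 1 < J) with hT
  have hJpos : 0 < J := by omega
  have j0mem : (⟨0, hJpos⟩ : Fin J) ∈ T := by
    simp [hT]; omega
  -- Dt ≥ 0
  have hDt0 : 0 ≤ Dt := by
    by_contra h
    push_neg at h
    have h1 : 1 < r ⟨0, hJpos⟩ ^ Dt := by
      rw [Real.one_lt_rpow_iff_of_pos (hr0 _)]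
      exact Or.inr ⟨hr1 _, h⟩
    have h2 : r ⟨0, hJpos⟩ ^ Dt ≤ ∑ j ∈ T, r j ^ Dt :=
      Finset.single_le_sum (fun j _ => (Real.rpow_pos_of_pos (hr0 j) _).le) j0mem
    rw [hDt] at h2
    linarith
  have hσpos : 0 ≤ σ := le_trans hDt0 hre1.le
  -- the zero condition
  have hsum : ∑ j, ((r j : ℂ) ^ s₀).re = 1 := by
    have : (∑ j, (r j : ℂ) ^ s₀) = 1 := by linear_combination -hzero
    calc ∑ j, ((r j : ℂ) ^ s₀).re = (∑ j, (r j : ℂ) ^ s₀).re := (Complex.re_sum _ _).symm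
    _ = 1 := by rw [this]; rfl
  -- last index
  have hlast : J - 1 < J := by omega
  set last : Fin J := ⟨J - 1, hlast⟩ with hlastdef
  have hTeq : T = Finset.univ.erase last := by
    ext j
    simp only [hT, Finset.mem_filter, Finset.mem_univ, true_and, Finset.mem_erase]
    constructor
    · intro h
      refine ⟨?_, trivial⟩
      intro hj; rw [hj] at h; simp [hlastdef] at h; omega
    · intro ⟨h, _⟩
      have := j.isLt
      rcases Nat.lt_or_ge ((j : ℕ) + 1) J with h' | h'
      · exact h'
      · exfalso; apply h; apply Fin.ext; simp [hlastdef]; omega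
  -- abs bound
  have habs : ∀ j : Fin J, ((r j : ℂ) ^ s₀).re ≤ r j ^ σ := by
    intro j
    calc ((r j : ℂ) ^ s₀).re ≤ ‖(r j : ℂ) ^ s₀‖ := Complex.re_le_norm _
    _ = r j ^ σ := Complex.norm_cpow_eq_rpow_re_of_pos (hr0 j) _
  -- key chain
  have h1 : ∑ j ∈ Finset.univ.erase j₀, ((r j : ℂ) ^ s₀).re
      ≤ ∑ j ∈ Finset.univ.erase j₀, r j ^ σ :=
    Finset.sum_le_sum (fun j _ => habs j)
  have h2 : ∑ j ∈ Finset.univ.erase j₀, r j ^ σ ≤ ∑ j ∈ Finset.univ.erase last, r j ^ σ := by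
    rw [Finset.sum_erase_eq_sub (Finset.mem_univ j₀),
        Finset.sum_erase_eq_sub (Finset.mem_univ last)]
    have : r last ^ σ ≤ r j₀ ^ σ := by
      apply Real.rpow_le_rpow (hr0 last).le _ hσpos
      exact hanti (by rw [Fin.le_def]; have := j₀.isLt; simp [hlastdef]; omega)
    linarith
  have h3 : ∑ j ∈ Finset.univ.erase last, r j ^ σ < 1 := by
    rw [← hTeq, ← hDt]
    apply Finset.sum_lt_sum_of_nonempty ⟨_, j0mem⟩
    intro j _
    exact Real.rpow_lt_rpow_of_exponent_gt (hr0 j) (hr1 j) hre1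
  have h4 : ((r j₀ : ℂ) ^ s₀).re
      = 1 - ∑ j ∈ Finset.univ.erase j₀, ((r j : ℂ) ^ s₀).re := by
    rw [Finset.sum_erase_eq_sub (Finset.mem_univ j₀), hsum]
    ring
  rw [h4]
  linarith
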